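/- Let S⁽ⁿ⁾ be the Sylvester matrix of order 2ⁿ. Define ρ⁽ⁿ⁾ = max_{1≤m≤2ⁿ} ∑_{i=1}^{2ⁿ} |∑_{k=1}^m S⁽ⁿ⁾_{k i}|. Then ρ⁽ⁿ⁾ = (3n+7)·2ⁿ/9 + 2·(−1)ⁿ/9 for every n ≥ 1. -/
import Mathlib


/-- The Sylvester matrix of order `2 ^ n`, with rows and columns indexed by
`1, …, 2 ^ n`.  It is defined by the recursion
`S⁽ⁿ⁺¹⁾ = [[S⁽ⁿ⁾, S⁽ⁿ⁾], [S⁽ⁿ⁾, -S⁽ⁿ⁾]]` starting from the `1 × 1` matrix `[1]`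
(so that `S⁽¹⁾ = [[1, 1], [1, -1]]`). -/
def Syl : ℕ → ℕ → ℕ → ℝ
  | 0, _, _ => 1
  | n + 1, k, i =>
    if k ≤ 2 ^ n then
      if i ≤ 2 ^ n then Syl n k i else Syl n k (i - 2 ^ n)
    else
      if i ≤ 2 ^ n then Syl n (k - 2 ^ n) i else -Syl n (k - 2 ^ n) (i - 2 ^ n)

noncomputable def F (n m i : ℕ) : ℝ := ∑ k ∈ Finset.Icc 1 m, Syl n k i
noncomputable def G (n m : ℕ) : ℝ := ∑ i ∈ Finset.Icc 1 (2 ^ n), |F n m i|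

lemma Icc_sum_shift (f : ℕ → ℝ) (N M : ℕ) :
    ∑ i ∈ Finset.Icc 1 (N + M), f i
      = (∑ i ∈ Finset.Icc 1 N, f i) + ∑ j ∈ Finset.Icc 1 M, f (N + j) := by
  induction M with
  | zero => simp
  | succ M ih =>
      rw [← Nat.add_assoc, Finset.sum_Icc_succ_top (Nat.le_add_left 1 _),
        Finset.sum_Icc_succ_top (Nat.le_add_left 1 _), ih, Nat.add_assoc]
      ring

lemma Syl_one (n k : ℕ) (hk : k ≤ 2 ^ n) : Syl n k 1 = 1 := by
  induction n generalizing k with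
  | zero => simp [Syl]
  | succ n ih =>
      by_cases h : k ≤ 2 ^ n
      · simp [Syl, h, Nat.one_le_two_pow, ih k h]
      · simp [Syl, h, Nat.one_le_two_pow, ih (k - 2 ^ n) (by omega)]

lemma F_one (n m : ℕ) (hm : m ≤ 2 ^ n) : F n m 1 = m := by
  unfold F
  rw [Finset.sum_congr rfl (fun k hk => Syl_one n k ?_), Finset.sum_const,
    Nat.card_Icc]
  · simp
  · exact le_trans (Finset.mem_Icc.mp hk).2 hm

lemma F_low (n m i : ℕ) (hm : m ≤ 2 ^ n) (hi1 : 1 ≤ i) (hi : i ≤ 2 ^ n) :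
    F (n + 1) m i = F n m i := by
  unfold F
  refine Finset.sum_congr rfl fun k hk => ?_
  have : k ≤ 2 ^ n := le_trans (Finset.mem_Icc.mp hk).2 hm
  simp [Syl, this, hi]

lemma F_low_shift (n m i : ℕ) (hm : m ≤ 2 ^ n) (hi1 : 1 ≤ i) (hi : i ≤ 2 ^ n) :
    F (n + 1) m (2 ^ n + i) = F n m i := by
  unfold F
  refine Finset.sum_congr rfl fun k hk => ?_
  have hk2 : k ≤ 2 ^ n := le_trans (Finset.mem_Icc.mp hk).2 hm
  have h2 : ¬ (2 ^ n + i ≤ 2 ^ n) := by omega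
  simp [Syl, hk2, h2]

lemma F_high (n r i : ℕ) (hr : r ≤ 2 ^ n) (hi1 : 1 ≤ i) (hi : i ≤ 2 ^ n) :
    F (n + 1) (2 ^ n + r) i = F n (2 ^ n) i + F n r i := by
  unfold F
  rw [Icc_sum_shift]
  congr 1
  · refine Finset.sum_congr rfl fun k hk => ?_
    have : k ≤ 2 ^ n := (Finset.mem_Icc.mp hk).2
    simp [Syl, this, hi]
  · refine Finset.sum_congr rfl fun j hj => ?_
    have hj1 : 1 ≤ j := (Finset.mem_Icc.mp hj).1
    have h2 : ¬ (2 ^ n + j ≤ 2 ^ n) := by omega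
    have h3 : 2 ^ n + j - 2 ^ n = j := by omega
    simp [Syl, h2, h3, hi]

lemma F_high_shift (n r i : ℕ) (hr : r ≤ 2 ^ n) (hi1 : 1 ≤ i) (hi : i ≤ 2 ^ n) :
    F (n + 1) (2 ^ n + r) (2 ^ n + i) = F n (2 ^ n) i - F n r i := by
  unfold F
  rw [Icc_sum_shift, sub_eq_add_neg, ← Finset.sum_neg_distrib]
  congr 1
  · refine Finset.sum_congr rfl fun k hk => ?_
    have hk2 : k ≤ 2 ^ n := (Finset.mem_Icc.mp hk).2
    have h2 : ¬ (2 ^ n + i ≤ 2 ^ n) := by omega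
    simp [Syl, hk2, h2]
  · refine Finset.sum_congr rfl fun j hj => ?_
    have hj1 : 1 ≤ j := (Finset.mem_Icc.mp hj).1
    have h2 : ¬ (2 ^ n + j ≤ 2 ^ n) := by omega
    have h2' : ¬ (2 ^ n + i ≤ 2 ^ n) := by omega
    have h3 : 2 ^ n + j - 2 ^ n = j := by omega
    have h3' : 2 ^ n + i - 2 ^ n = i := by omega
    simp [Syl, h2, h2', h3, h3']

lemma F_full (n i : ℕ) (hi1 : 1 ≤ i) (hi : i ≤ 2 ^ n) :
    F n (2 ^ n) i = if i = 1 then ((2 : ℝ) ^ n) else 0 := by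
  induction n generalizing i with
  | zero =>
      have : i = 1 := by omega
      subst this
      simp [F, Syl]
  | succ n ih =>
      have h2 : (2 : ℕ) ^ (n + 1) = 2 ^ n + 2 ^ n := by ring
      by_cases h : i ≤ 2 ^ n
      · rw [h2, F_high n (2 ^ n) i le_rfl hi1 h, ih i hi1 h]
        by_cases h1 : i = 1 <;> simp [h1] <;> ring
      · obtain ⟨j, hj1, hj2, rfl⟩ : ∃ j, 1 ≤ j ∧ j ≤ 2 ^ n ∧ i = 2 ^ n + j := by
          refine ⟨i - 2 ^ n, by omega, by omega, by omega⟩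
        rw [h2, F_high_shift n (2 ^ n) j le_rfl hj1 hj2, sub_self]
        have : ¬ (2 ^ n + j = 1) := by have := Nat.one_le_two_pow (n := n); omega
        simp [this]
lemma G_low (n m : ℕ) (hm : m ≤ 2 ^ n) : G (n + 1) m = 2 * G n m := by
  unfold G
  rw [show (2 : ℕ) ^ (n + 1) = 2 ^ n + 2 ^ n by ring, Icc_sum_shift]
  have hA : ∑ i ∈ Finset.Icc 1 (2 ^ n), |F (n + 1) m i|
      = ∑ i ∈ Finset.Icc 1 (2 ^ n), |F n m i| :=
    Finset.sum_congr rfl fun i hi => by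
      rw [F_low n m i hm (Finset.mem_Icc.mp hi).1 (Finset.mem_Icc.mp hi).2]
  have hB : ∑ i ∈ Finset.Icc 1 (2 ^ n), |F (n + 1) m (2 ^ n + i)|
      = ∑ i ∈ Finset.Icc 1 (2 ^ n), |F n m i| :=
    Finset.sum_congr rfl fun i hi => by
      rw [F_low_shift n m i hm (Finset.mem_Icc.mp hi).1 (Finset.mem_Icc.mp hi).2]
  rw [hA, hB]; ring

lemma G_high (n r : ℕ) (hr : r ≤ 2 ^ n) :
    G (n + 1) (2 ^ n + r) = 2 ^ (n + 1) + 2 * (G n r - r) := by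
  have h1 : (1 : ℕ) ∈ Finset.Icc 1 (2 ^ n) := by
    simp [Nat.one_le_two_pow]
  unfold G
  rw [show (2 : ℕ) ^ (n + 1) = 2 ^ n + 2 ^ n by ring, Icc_sum_shift]
  have hA : ∑ i ∈ Finset.Icc 1 (2 ^ n), |F (n + 1) (2 ^ n + r) i|
      = ∑ i ∈ Finset.Icc 1 (2 ^ n), |F n (2 ^ n) i + F n r i| :=
    Finset.sum_congr rfl fun i hi => by
      rw [F_high n r i hr (Finset.mem_Icc.mp hi).1 (Finset.mem_Icc.mp hi).2]
  have hB : ∑ i ∈ Finset.Icc 1 (2 ^ n), |F (n + 1) (2 ^ n + r) (2 ^ n + i)|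
      = ∑ i ∈ Finset.Icc 1 (2 ^ n), |F n (2 ^ n) i - F n r i| :=
    Finset.sum_congr rfl fun i hi => by
      rw [F_high_shift n r i hr (Finset.mem_Icc.mp hi).1 (Finset.mem_Icc.mp hi).2]
  rw [hA, hB, ← Finset.add_sum_erase _ _ h1, ← Finset.add_sum_erase _ _ h1,
    ← Finset.add_sum_erase _ (fun i => |F n r i|) h1]
  have hF1 : F n (2 ^ n) 1 = (2 : ℝ) ^ n := by
    rw [F_full n 1 le_rfl Nat.one_le_two_pow]; simp
  have hFr : F n r 1 = (r : ℝ) := F_one n r hr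
  have hrx : (r : ℝ) ≤ 2 ^ n := by
    calc (r : ℝ) ≤ ((2 ^ n : ℕ) : ℝ) := by exact_mod_cast hr
    _ = 2 ^ n := by push_cast; ring
  have hr0 : (0 : ℝ) ≤ r := Nat.cast_nonneg r
  have e1 : |F n (2 ^ n) 1 + F n r 1| = 2 ^ n + r := by
    rw [hF1, hFr, abs_of_nonneg (by positivity)]
  have e2 : |F n (2 ^ n) 1 - F n r 1| = 2 ^ n - r := by
    rw [hF1, hFr, abs_of_nonneg (by linarith)]
  have e3 : ∑ i ∈ (Finset.Icc 1 (2 ^ n)).erase 1, |F n (2 ^ n) i + F n r i|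
      = ∑ i ∈ (Finset.Icc 1 (2 ^ n)).erase 1, |F n r i| := by
    refine Finset.sum_congr rfl fun i hi => ?_
    obtain ⟨hne, hmem⟩ := Finset.mem_erase.mp hi
    rw [F_full n i (Finset.mem_Icc.mp hmem).1 (Finset.mem_Icc.mp hmem).2,
      if_neg hne, zero_add]
  have e4 : ∑ i ∈ (Finset.Icc 1 (2 ^ n)).erase 1, |F n (2 ^ n) i - F n r i|
      = ∑ i ∈ (Finset.Icc 1 (2 ^ n)).erase 1, |F n r i| := by
    refine Finset.sum_congr rfl fun i hi => ?_
    obtain ⟨hne, hmem⟩ := Finset.mem_erase.mp hi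
    rw [F_full n i (Finset.mem_Icc.mp hmem).1 (Finset.mem_Icc.mp hmem).2,
      if_neg hne, zero_sub, abs_neg]
  rw [e3, e4, e1, e2, hFr, abs_of_nonneg hr0]
  push_cast
  ring
noncomputable def aR (n : ℕ) : ℝ := ((3 * n + 7) * 2 ^ n) / 9 + 2 * (-1) ^ n / 9
noncomputable def bR (n : ℕ) : ℝ := ((3 * n + 1) * 2 ^ n - (-1) ^ n) / 9
noncomputable def cR (n : ℕ) : ℝ := ((6 * n - 1) * 2 ^ n + (-1) ^ n) / 18

def PQ : ℕ → ℕ × ℕ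
  | 0 => (1, 0)
  | n + 1 => (2 ^ n + (PQ n).2, (PQ n).1)

lemma PQ_mem (n : ℕ) : 1 ≤ (PQ n).1 ∧ (PQ n).1 ≤ 2 ^ n ∧ (PQ n).2 ≤ 2 ^ n := by
  induction n with
  | zero => simp [PQ]
  | succ n ih =>
      refine ⟨by simp [PQ]; omega, ?_, ?_⟩
      · have : (PQ (n + 1)).1 = 2 ^ n + (PQ n).2 := rfl
        rw [this]
        have : (2 : ℕ) ^ (n + 1) = 2 ^ n + 2 ^ n := by ring
        omega
      · have h : (PQ (n + 1)).2 = (PQ n).1 := rfl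
        have : (2 : ℕ) ^ n ≤ 2 ^ (n + 1) := Nat.pow_le_pow_right (by norm_num) (by omega)
        omega

lemma PQ_val (n : ℕ) : ((PQ n).1 : ℝ) = (2 * 2 ^ n + (-1) ^ n) / 3 ∧
    ((PQ n).2 : ℝ) = (2 ^ n - (-1) ^ n) / 3 := by
  induction n with
  | zero => norm_num [PQ]
  | succ n ih =>
      constructor
      · have h : (PQ (n + 1)).1 = 2 ^ n + (PQ n).2 := rfl
        rw [h]
        push_cast [ih.2]
        ring
      · have h : (PQ (n + 1)).2 = (PQ n).1 := rfl
        rw [h, ih.1]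
        ring

lemma key (n : ℕ) :
    (∀ m, 1 ≤ m → m ≤ 2 ^ n →
      G n m ≤ aR n ∧ G n m ≤ bR n + m ∧ G n m ≤ cR n + 3 / 2 * m)
    ∧ G n (PQ n).1 = aR n
    ∧ G n (PQ n).2 = bR n + (PQ n).2 := by
  induction n with
  | zero =>
      have hG1 : G 0 1 = 1 := by simp [G, F, Syl]
      have hG0 : G 0 0 = 0 := by simp [G, F]
      refine ⟨fun m hm1 hm2 => ?_, ?_, ?_⟩
      · have : m = 1 := by omega
        subst this
        rw [hG1]
        unfold aR bR cR
        norm_num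
      · show G 0 1 = aR 0
        rw [hG1]; unfold aR; norm_num
      · show G 0 0 = bR 0 + ((0 : ℕ) : ℝ)
        rw [hG0]; unfold bR; norm_num
  | succ n ih =>
      have hx : (1 : ℝ) ≤ 2 ^ n := one_le_pow₀ (by norm_num)
      have he : ((-1 : ℝ)) ^ n = 1 ∨ ((-1 : ℝ)) ^ n = -1 := neg_one_pow_eq_or ℝ n
      have h2p : (2 : ℝ) ^ (n + 1) = 2 * 2 ^ n := by ring
      have ha1 : aR (n + 1) = 2 ^ (n + 1) + 2 * bR n := by
        unfold aR bR; push_cast; ring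
      have hb1 : bR (n + 1) = aR n + bR n := by
        unfold aR bR; push_cast; ring
      have hb2 : bR (n + 1) = 2 ^ n + 2 * cR n := by
        unfold bR cR; push_cast; ring
      have hc1 : cR (n + 1) = 3 / 2 * bR n + aR n / 2 := by
        unfold bR cR aR; push_cast; ring
      have ha2 : 2 * aR n ≤ aR (n + 1) := by
        unfold aR; push_cast
        rcases he with h | h <;> simp only [pow_succ, h] <;> nlinarith [hx]
      have hc2 : 2 ^ n / 2 + 2 * cR n - 1 / 2 ≤ cR (n + 1) := by
        unfold cR; push_cast
        rcases he with h | h <;> simp only [pow_succ, h] <;> nlinarith [hx]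
      refine ⟨fun m hm1 hm2 => ?_, ?_, ?_⟩
      · by_cases hm : m ≤ 2 ^ n
        · obtain ⟨hA, hB, hC⟩ := ih.1 m hm1 hm
          rw [G_low n m hm]
          exact ⟨by linarith, by linarith, by linarith⟩
        · set r := m - 2 ^ n with hrdef
          have hr1 : 1 ≤ r := by omega
          have hr2 : r ≤ 2 ^ n := by
            have : (2 : ℕ) ^ (n + 1) = 2 ^ n + 2 ^ n := by ring
            omega
          have hmeq : m = 2 ^ n + r := by omega
          have hmr : (m : ℝ) = 2 ^ n + (r : ℝ) := by
            rw [hmeq]; push_cast; ring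
          have hr1' : (1 : ℝ) ≤ r := by exact_mod_cast hr1
          obtain ⟨hA, hB, hC⟩ := ih.1 r hr1 hr2
          rw [hmeq, G_high n r hr2]
          push_cast
          refine ⟨by linarith, by linarith, by linarith⟩
      · have h1 : (PQ (n + 1)).1 = 2 ^ n + (PQ n).2 := rfl
        have hq : (PQ n).2 ≤ 2 ^ n := (PQ_mem n).2.2
        rw [h1, G_high n _ hq, ih.2.2, ha1]
        ring
      · have h2 : (PQ (n + 1)).2 = (PQ n).1 := rfl
        have hp : (PQ n).1 ≤ 2 ^ n := (PQ_mem n).2.1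
        have hpv : ((PQ n).1 : ℝ) = (2 * 2 ^ n + (-1) ^ n) / 3 := (PQ_val n).1
        have hab : aR n - bR n = (2 * 2 ^ n + (-1) ^ n) / 3 := by
          unfold aR bR; ring
        rw [h2, G_low n _ hp, ih.2.1, hb1, hpv]
        linarith [hab]


/-- `ρ⁽ⁿ⁾ = max_{1 ≤ m ≤ 2^n} ∑_{i=1}^{2^n} |∑_{k=1}^m S⁽ⁿ⁾_{k i}|` (the value
of `ρ⁽ⁿ⁾` in `l₁` with respect to the natural basis) equals
`(3n + 7)·2ⁿ/9 + 2·(−1)ⁿ/9`. -/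
theorem sylvester_rho_l1 (n : ℕ) (hn : 1 ≤ n) :
    ((Finset.Icc 1 (2 ^ n)).sup' ⟨1, by simp [Nat.one_le_two_pow]⟩
        fun m => ∑ i ∈ Finset.Icc 1 (2 ^ n), |∑ k ∈ Finset.Icc 1 m, Syl n k i|) =
      ((3 * n + 7) * 2 ^ n) / 9 + 2 * (-1 : ℝ) ^ n / 9 := by
  have hkey := key n
  refine le_antisymm (Finset.sup'_le _ _ fun m hm => ?_) ?_
  · obtain ⟨hm1, hm2⟩ := Finset.mem_Icc.mp hm
    exact (hkey.1 m hm1 hm2).1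
  · have hmem : (PQ n).1 ∈ Finset.Icc 1 (2 ^ n) :=
      Finset.mem_Icc.mpr ⟨(PQ_mem n).1, (PQ_mem n).2.1⟩
    have h2 := Finset.le_sup'
      (f := fun m => ∑ i ∈ Finset.Icc 1 (2 ^ n), |∑ k ∈ Finset.Icc 1 m, Syl n k i|) hmem
    have h3 : G n (PQ n).1 = aR n := hkey.2.1
    exact le_trans (le_of_eq h3.symm) h2
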